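/- Consider the rescaled distributed Nash equilibrium seeking dynamics over a strongly connected digraph: Z : [0, ∞) → ℝ^{N×N} is differentiable and satisfies, for all t ≥ 0, Ż(t) = −α Λ L Z(t) − diag(𝐅(Z(t))), where Λ = diag(w_1, …, w_N) with w_i > 0 for all i. Assume: (i) F is l̲-strongly monotone and l̄-Lipschitz with l̲, l̄ > 0; (ii) 𝐅 is l_F-Lipschitz with l_F > 0, and set l = max(l̄, l_F); (iii) L is the Laplacian of a strongly connected digraph and the rescaled matrix Λ L is weight-balanced, i.e., 1ᵀ Λ L = 0; (iv) λ₂′ > 0 satisfies xᵀ Sym(Λ L) x ≥ λ₂′ ‖x‖² for all x ∈ ℝ^N with 1ᵀx = 0, where Sym(M) = (M + Mᵀ)/2; (v) z* ∈ ℝ^N satisfies F(z*) = 0; (vi) α > (1/λ₂′)(l²/l̲ + l). Then there exist constants κ > 0 and ν > 0, independent of the initial condition, such that for all t ≥ 0, ‖Z(t) − 1 (z*)ᵀ‖ ≤ κ e^{−ν t} ‖Z(0) − 1 (z*)ᵀ‖; in particular every row Zⁱ(t) converges exponentially to z* as t → ∞. -/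

import Mathlib

open scoped BigOperators

/-- Euclidean norm of a vector in `ℝ^N`. -/
noncomputable def vnorm {N : ℕ} (x : Fin N → ℝ) : ℝ := Real.sqrt (∑ i, (x i) ^ 2)

/-- Frobenius norm of a matrix in `ℝ^{N×N}`. -/
noncomputable def mnorm {N : ℕ} (A : Matrix (Fin N) (Fin N) ℝ) : ℝ :=
  Real.sqrt (∑ i, ∑ j, (A i j) ^ 2)

lemma vnorm_nonneg {N : ℕ} (x : Fin N → ℝ) : 0 ≤ vnorm x := Real.sqrt_nonneg _
lemma mnorm_nonneg {N : ℕ} (A : Matrix (Fin N) (Fin N) ℝ) : 0 ≤ mnorm A := Real.sqrt_nonneg _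
lemma vnorm_sq {N : ℕ} (x : Fin N → ℝ) : vnorm x ^ 2 = ∑ i, (x i) ^ 2 :=
  Real.sq_sqrt (by positivity)
lemma mnorm_sq {N : ℕ} (A : Matrix (Fin N) (Fin N) ℝ) : mnorm A ^ 2 = ∑ i, ∑ j, (A i j) ^ 2 :=
  Real.sq_sqrt (by positivity)

lemma abs_sum_le_vnorm {N : ℕ} (x y : Fin N → ℝ) :
    |∑ i, x i * y i| ≤ vnorm x * vnorm y := by
  have h := Finset.sum_mul_sq_le_sq_mul_sq Finset.univ x y
  calc |∑ i, x i * y i| = Real.sqrt ((∑ i, x i * y i) ^ 2) := (Real.sqrt_sq_eq_abs _).symm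
    _ ≤ Real.sqrt ((∑ i, x i ^ 2) * ∑ i, y i ^ 2) := Real.sqrt_le_sqrt h
    _ = vnorm x * vnorm y := Real.sqrt_mul (by positivity) _

lemma key_ineq (N : ℕ) (hN : 1 ≤ N)
    (L : Matrix (Fin N) (Fin N) ℝ)
    (hLrow : ∀ i, ∑ k, L i k = 0)
    (w : Fin N → ℝ)
    (hbal : ∀ j, ∑ i, w i * L i j = 0)
    (F : (Fin N → ℝ) → (Fin N → ℝ)) (bF : Matrix (Fin N) (Fin N) ℝ → (Fin N → ℝ))
    (hbF : ∀ Z i, bF Z i = F (Z i) i)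
    (lunder lbar lF : ℝ) (hlunder : 0 < lunder)
    (hmono : ∀ x y : Fin N → ℝ,
      lunder * (vnorm (x - y)) ^ 2 ≤ ∑ i, (F x i - F y i) * (x i - y i))
    (hFlip : ∀ x y : Fin N → ℝ, vnorm (F x - F y) ≤ lbar * vnorm (x - y))
    (hbFlip : ∀ Z W : Matrix (Fin N) (Fin N) ℝ,
      vnorm (bF Z - bF W) ≤ lF * mnorm (Z - W))
    (lam2' : ℝ)
    (hlam2'spec : ∀ x : Fin N → ℝ, (∑ i, x i) = 0 →
      lam2' * (vnorm x) ^ 2 ≤ ∑ i, ∑ j, x i * ((w i * L i j + w j * L j i) / 2) * x j)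
    (zstar : Fin N → ℝ) (hzstar : F zstar = 0)
    (α ε : ℝ) (hα_pos : 0 < α) (hε_pos : 0 < ε)
    (hε1 : ε ≤ lunder) (hε2 : ε ≤ α * lam2' - max lbar lF)
    (hdet : (max lbar lF) ^ 2 ≤ (lunder - ε) * (α * lam2' - max lbar lF - ε))
    (hlnn : 0 ≤ max lbar lF)
    (A : Matrix (Fin N) (Fin N) ℝ) :
    ∑ i, ∑ j, 2 * (A i j - zstar j) *
        (-α * (w i * ∑ k, L i k * A k j) - (if i = j then bF A i else 0))
      ≤ -(2 * ε / N) * ∑ i, ∑ j, (A i j - zstar j) ^ 2 := by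
  set l := max lbar lF with hl
  have hN0 : (0:ℝ) < N := by exact_mod_cast Nat.lt_of_lt_of_le Nat.zero_lt_one hN
  have hN1 : (1:ℝ) ≤ N := by exact_mod_cast hN
  -- decomposition
  set ybar : Fin N → ℝ := fun j => (∑ i, A i j) / N with hybar
  set m : Fin N → ℝ := fun j => ybar j - zstar j with hm
  set P : Matrix (Fin N) (Fin N) ℝ := Matrix.of (fun i j => A i j - ybar j) with hP
  have hPdef : ∀ i j, P i j = A i j - ybar j := fun i j => rfl
  have hD : ∀ i j, A i j - zstar j = P i j + m j := by intro i j; simp [hPdef, hm]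
  have hPcol : ∀ j, ∑ i, P i j = 0 := by
    intro j
    have h1 : ∑ i, P i j = (∑ i, A i j) - (N:ℝ) * ((∑ i, A i j) / (N:ℝ)) := by
      simp only [hPdef, hybar]
      rw [Finset.sum_sub_distrib, Finset.sum_const, Finset.card_univ, Fintype.card_fin,
        nsmul_eq_mul]
    rw [h1]
    field_simp
    ring
  set M : ℝ := vnorm m with hM
  set q : ℝ := mnorm P with hq
  have hMnn : 0 ≤ M := vnorm_nonneg m
  have hqnn : 0 ≤ q := mnorm_nonneg P
  have hM2 : M ^ 2 = ∑ j, m j ^ 2 := vnorm_sq m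
  have hq2 : q ^ 2 = ∑ i, ∑ j, P i j ^ 2 := mnorm_sq P
  -- energy decomposition
  have hcol : ∀ j, ∑ i, (A i j - zstar j) ^ 2 = (N:ℝ) * m j ^ 2 + ∑ i, P i j ^ 2 := by
    intro j
    have h0 := hPcol j
    calc ∑ i, (A i j - zstar j) ^ 2 = ∑ i, (P i j ^ 2 + (2 * m j) * P i j + m j ^ 2) := by
          apply Finset.sum_congr rfl; intro i _; rw [hD]; ring
      _ = (∑ i, P i j ^ 2) + (2 * m j) * (∑ i, P i j) + (N:ℝ) * m j ^ 2 := by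
          rw [Finset.sum_add_distrib, Finset.sum_add_distrib, ← Finset.mul_sum,
            Finset.sum_const, Finset.card_univ, Fintype.card_fin, nsmul_eq_mul]
      _ = (N:ℝ) * m j ^ 2 + ∑ i, P i j ^ 2 := by rw [h0]; ring
  have gdecomp : ∑ i, ∑ j, (A i j - zstar j) ^ 2 = (N:ℝ) * M ^ 2 + q ^ 2 := by
    calc ∑ i, ∑ j, (A i j - zstar j) ^ 2 = ∑ j, ∑ i, (A i j - zstar j) ^ 2 := Finset.sum_comm
      _ = ∑ j, ((N:ℝ) * m j ^ 2 + ∑ i, P i j ^ 2) := Finset.sum_congr rfl (fun j _ => hcol j)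
      _ = (N:ℝ) * (∑ j, m j ^ 2) + ∑ j, ∑ i, P i j ^ 2 := by
          rw [Finset.sum_add_distrib, Finset.mul_sum]
      _ = (N:ℝ) * M ^ 2 + q ^ 2 := by
          rw [hM2, hq2]; congr 1; exact Finset.sum_comm
  -- Laplacian kills constants in columns
  have hinner : ∀ i j, (∑ k, L i k * A k j) = ∑ k, L i k * P k j := by
    intro i j
    have h1 : ∀ k, L i k * A k j = L i k * P k j + ybar j * L i k := by
      intro k; rw [hPdef]; ring
    rw [Finset.sum_congr rfl (fun k _ => h1 k), Finset.sum_add_distrib, ← Finset.mul_sum,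
      hLrow i, mul_zero, add_zero]
  -- weight balance kills the mean component
  have hzero2 : ∀ j, ∑ i, w i * ∑ k, L i k * P k j = 0 := by
    intro j
    calc ∑ i, w i * ∑ k, L i k * P k j = ∑ i, ∑ k, w i * L i k * P k j := by
          apply Finset.sum_congr rfl; intro i _
          rw [Finset.mul_sum]
          apply Finset.sum_congr rfl; intro k _; ring
      _ = ∑ k, ∑ i, w i * L i k * P k j := Finset.sum_comm
      _ = ∑ k, (∑ i, w i * L i k) * P k j := by
          apply Finset.sum_congr rfl; intro k _; rw [Finset.sum_mul]
      _ = 0 := by simp [hbal]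
  -- column quadratic form bound
  have hT1col : ∀ j, lam2' * ∑ i, P i j ^ 2 ≤ ∑ i, P i j * (w i * ∑ k, L i k * P k j) := by
    intro j
    have hx0 : (∑ i, P i j) = 0 := hPcol j
    have hspec := hlam2'spec (fun i => P i j) hx0
    have hvn : vnorm (fun i => P i j) ^ 2 = ∑ i, P i j ^ 2 := vnorm_sq _
    rw [hvn] at hspec
    refine le_trans hspec (le_of_eq ?_)
    have hswap : ∑ i, ∑ k, P i j * (w k * L k i / 2) * P k j
        = ∑ i, ∑ k, P i j * (w i * L i k / 2) * P k j := by
      rw [Finset.sum_comm]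
      apply Finset.sum_congr rfl; intro i _
      apply Finset.sum_congr rfl; intro k _; ring
    calc ∑ i, ∑ k, P i j * ((w i * L i k + w k * L k i) / 2) * P k j
        = (∑ i, ∑ k, P i j * (w i * L i k / 2) * P k j)
          + ∑ i, ∑ k, P i j * (w k * L k i / 2) * P k j := by
          rw [← Finset.sum_add_distrib]
          apply Finset.sum_congr rfl; intro i _
          rw [← Finset.sum_add_distrib]
          apply Finset.sum_congr rfl; intro k _; ring
      _ = ∑ i, ∑ k, P i j * (w i * L i k) * P k j := by
          rw [hswap, ← Finset.sum_add_distrib]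
          apply Finset.sum_congr rfl; intro i _
          rw [← Finset.sum_add_distrib]
          apply Finset.sum_congr rfl; intro k _; ring
      _ = ∑ i, P i j * (w i * ∑ k, L i k * P k j) := by
          apply Finset.sum_congr rfl; intro i _
          symm
          rw [Finset.mul_sum, Finset.mul_sum]
          apply Finset.sum_congr rfl; intro k _; ring
  -- total consensus-term bound
  have hT1 : lam2' * q ^ 2 ≤ ∑ i, ∑ j, (A i j - zstar j) * (w i * ∑ k, L i k * A k j) := by
    have hrw : ∑ i, ∑ j, (A i j - zstar j) * (w i * ∑ k, L i k * A k j)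
        = ∑ j, ∑ i, P i j * (w i * ∑ k, L i k * P k j) := by
      rw [Finset.sum_comm]
      apply Finset.sum_congr rfl; intro j _
      have h1 : ∀ i, (A i j - zstar j) * (w i * ∑ k, L i k * A k j)
          = P i j * (w i * ∑ k, L i k * P k j) + m j * (w i * ∑ k, L i k * P k j) := by
        intro i; rw [hD, hinner]; ring
      rw [Finset.sum_congr rfl (fun i _ => h1 i), Finset.sum_add_distrib, ← Finset.mul_sum,
        hzero2 j, mul_zero, add_zero]
    rw [hrw, hq2,
      show (∑ i, ∑ j, P i j ^ 2) = ∑ j, ∑ i, P i j ^ 2 from Finset.sum_comm, Finset.mul_sum]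
    exact Finset.sum_le_sum (fun j _ => hT1col j)
  -- pseudogradient term
  set e : Fin N → ℝ := fun i => bF A i - F ybar i with he
  have hevn : vnorm e ≤ lF * q := by
    have h := hbFlip A (Matrix.of (fun _ j => ybar j))
    have h2 : bF A - bF (Matrix.of (fun _ j => ybar j)) = e := by
      funext i
      simp only [Pi.sub_apply, he, hbF]
      rfl
    have h3 : mnorm (A - Matrix.of (fun _ j => ybar j)) = q := by
      unfold mnorm
      congr 1
    rw [h2, h3] at h
    exact h
  have hFy : vnorm (F ybar) ≤ lbar * M := by
    have h := hFlip ybar zstar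
    rw [hzstar, sub_zero] at h
    exact h
  have hmono' : lunder * M ^ 2 ≤ ∑ i, F ybar i * m i := by
    have h := hmono ybar zstar
    have h1 : ∀ i, (F ybar i - F zstar i) * (ybar i - zstar i) = F ybar i * m i := by
      intro i
      have : F zstar i = 0 := by rw [hzstar]; rfl
      rw [this, sub_zero]
    rw [Finset.sum_congr rfl (fun i _ => h1 i)] at h
    exact h
  have hdiagP : vnorm (fun i => P i i) ≤ q := by
    apply Real.sqrt_le_sqrt
    apply Finset.sum_le_sum
    intro i _
    exact Finset.single_le_sum (f := fun j => P i j ^ 2) (fun j _ => sq_nonneg _)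
      (Finset.mem_univ i)
  have hT2 : lunder * M ^ 2 - lbar * (M * q) - lF * (M * q) - lF * q ^ 2
      ≤ ∑ i, (A i i - zstar i) * bF A i := by
    have hsplit : ∑ i, (A i i - zstar i) * bF A i
        = (∑ i, F ybar i * m i) + ((∑ i, m i * e i)
          + ((∑ i, (fun i => P i i) i * F ybar i) + ∑ i, (fun i => P i i) i * e i)) := by
      rw [← Finset.sum_add_distrib, ← Finset.sum_add_distrib, ← Finset.sum_add_distrib]
      apply Finset.sum_congr rfl; intro i _
      have hbFi : bF A i = F ybar i + e i := by simp [he]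
      rw [hD, hbFi]; ring
    have h2 : |∑ i, m i * e i| ≤ lF * (M * q) := by
      calc |∑ i, m i * e i| ≤ vnorm m * vnorm e := abs_sum_le_vnorm m e
        _ ≤ M * (lF * q) := mul_le_mul_of_nonneg_left hevn hMnn
        _ = lF * (M * q) := by ring
    have h3 : |∑ i, (fun i => P i i) i * F ybar i| ≤ lbar * (M * q) := by
      calc |∑ i, (fun i => P i i) i * F ybar i|
          ≤ vnorm (fun i => P i i) * vnorm (F ybar) := abs_sum_le_vnorm _ _
        _ ≤ q * (lbar * M) := mul_le_mul hdiagP hFy (vnorm_nonneg _) hqnn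
        _ = lbar * (M * q) := by ring
    have h4 : |∑ i, (fun i => P i i) i * e i| ≤ lF * q ^ 2 := by
      calc |∑ i, (fun i => P i i) i * e i|
          ≤ vnorm (fun i => P i i) * vnorm e := abs_sum_le_vnorm _ _
        _ ≤ q * (lF * q) := mul_le_mul hdiagP hevn (vnorm_nonneg _) hqnn
        _ = lF * q ^ 2 := by ring
    rw [hsplit]
    have h2' := (abs_le.mp h2).1
    have h3' := (abs_le.mp h3).1
    have h4' := (abs_le.mp h4).1
    linarith
  -- split the left-hand side
  have hLHSsplit : ∑ i, ∑ j, 2 * (A i j - zstar j) *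
        (-α * (w i * ∑ k, L i k * A k j) - (if i = j then bF A i else 0))
      = (-2 * α) * (∑ i, ∑ j, (A i j - zstar j) * (w i * ∑ k, L i k * A k j))
        - 2 * ∑ i, (A i i - zstar i) * bF A i := by
    have hrow : ∀ i, ∑ j, 2 * (A i j - zstar j) *
          (-α * (w i * ∑ k, L i k * A k j) - (if i = j then bF A i else 0))
        = (-2 * α) * (∑ j, (A i j - zstar j) * (w i * ∑ k, L i k * A k j))
          - 2 * ((A i i - zstar i) * bF A i) := by
      intro i
      have h1 : ∀ j, 2 * (A i j - zstar j) *
            (-α * (w i * ∑ k, L i k * A k j) - (if i = j then bF A i else 0))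
          = (-2 * α) * ((A i j - zstar j) * (w i * ∑ k, L i k * A k j))
            - (if i = j then 2 * ((A i j - zstar j) * bF A i) else 0) := by
        intro j; by_cases hij : i = j <;> simp [hij] <;> ring
      rw [Finset.sum_congr rfl (fun j _ => h1 j), Finset.sum_sub_distrib, ← Finset.mul_sum,
        Finset.sum_ite_eq Finset.univ i (fun j => 2 * ((A i j - zstar j) * bF A i))]
      simp
    rw [Finset.sum_congr rfl (fun i _ => hrow i), Finset.sum_sub_distrib, ← Finset.mul_sum,
      ← Finset.mul_sum]
  rw [hLHSsplit, gdecomp]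
  -- scalar Young-type inequality
  have hMq : 2 * l * (M * q) ≤ (lunder - ε) * M ^ 2 + (α * lam2' - l - ε) * q ^ 2 := by
    have ha : 0 ≤ lunder - ε := by linarith
    have hb : 0 ≤ α * lam2' - l - ε := by linarith
    have h1 : l ≤ Real.sqrt ((lunder - ε) * (α * lam2' - l - ε)) := by
      have h := Real.sqrt_le_sqrt hdet
      rwa [Real.sqrt_sq hlnn] at h
    have h2 : Real.sqrt ((lunder - ε) * (α * lam2' - l - ε))
        = Real.sqrt (lunder - ε) * Real.sqrt (α * lam2' - l - ε) := Real.sqrt_mul ha _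
    nlinarith [sq_nonneg (Real.sqrt (lunder - ε) * M - Real.sqrt (α * lam2' - l - ε) * q),
      Real.sq_sqrt ha, Real.sq_sqrt hb, mul_nonneg hMnn hqnn,
      Real.sqrt_nonneg (lunder - ε), Real.sqrt_nonneg (α * lam2' - l - ε)]
  have hT1' := mul_le_mul_of_nonpos_left hT1 (by linarith : (-2 * α) ≤ 0)
  have hT2' := mul_le_mul_of_nonpos_left hT2 (by norm_num : (-2 : ℝ) ≤ 0)
  have hmul1 : lbar * (M * q) ≤ l * (M * q) :=
    mul_le_mul_of_nonneg_right (le_max_left _ _) (mul_nonneg hMnn hqnn)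
  have hmul2 : lF * (M * q) ≤ l * (M * q) :=
    mul_le_mul_of_nonneg_right (le_max_right _ _) (mul_nonneg hMnn hqnn)
  have hmul3 : lF * q ^ 2 ≤ l * q ^ 2 :=
    mul_le_mul_of_nonneg_right (le_max_right _ _) (sq_nonneg q)
  have h5 : (2 * ε / N) * q ^ 2 ≤ 2 * ε * q ^ 2 :=
    mul_le_mul_of_nonneg_right (div_le_self (by linarith) hN1) (sq_nonneg q)
  have hgoalrhs : -(2 * ε / N) * ((N : ℝ) * M ^ 2 + q ^ 2)
      = -(2 * ε * M ^ 2) - (2 * ε / N) * q ^ 2 := by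
    field_simp
    ring
  rw [hgoalrhs]
  linarith

/-- Exponential convergence of the rescaled distributed
Nash-equilibrium-seeking dynamics `Ż = −α Λ L Z − diag(𝐅(Z))`, where `Λ = diag(w)`
with positive weights makes `Λ L` weight-balanced. -/
theorem nash_seeking_rescaled
    (N : ℕ) (hN : 1 ≤ N)
    -- the weighted digraph and its Laplacian
    (a : Fin N → Fin N → ℝ) (L : Matrix (Fin N) (Fin N) ℝ)
    (ha_nonneg : ∀ i j, 0 ≤ a i j) (ha_diag : ∀ i, a i i = 0)
    (hLdef : ∀ i j, L i j = if i = j then ∑ k, a i k else -(a i j))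
    -- strongly connected (irreducible adjacency matrix)
    (hconn : ∀ S : Finset (Fin N), S.Nonempty → S ≠ Finset.univ →
      ∃ i ∈ S, ∃ j, j ∉ S ∧ 0 < a i j)
    -- the positive rescaling Λ = diag(w₁, …, w_N)
    (w : Fin N → ℝ) (hw : ∀ i, 0 < w i)
    -- (iii) Λ L is weight-balanced: 1ᵀ Λ L = 0
    (hbal : ∀ j, ∑ i, w i * L i j = 0)
    -- pseudogradient `F` and extended pseudogradient `𝐅` (row-wise evaluation)
    (F : (Fin N → ℝ) → (Fin N → ℝ)) (bF : Matrix (Fin N) (Fin N) ℝ → (Fin N → ℝ))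
    (hbF : ∀ Z i, bF Z i = F (Z i) i)
    (lunder lbar lF : ℝ) (hlunder : 0 < lunder) (hlbar : 0 < lbar) (hlF : 0 < lF)
    -- (i) F is l̲-strongly monotone and l̄-Lipschitz
    (hmono : ∀ x y : Fin N → ℝ,
      lunder * (vnorm (x - y)) ^ 2 ≤ ∑ i, (F x i - F y i) * (x i - y i))
    (hFlip : ∀ x y : Fin N → ℝ, vnorm (F x - F y) ≤ lbar * vnorm (x - y))
    -- (ii) 𝐅 is l_F-Lipschitz (Frobenius norm on matrices)
    (hbFlip : ∀ Z W : Matrix (Fin N) (Fin N) ℝ,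
      vnorm (bF Z - bF W) ≤ lF * mnorm (Z - W))
    -- (iv) λ₂′ > 0 with xᵀ Sym(Λ L) x ≥ λ₂′‖x‖² whenever 1ᵀx = 0
    (lam2' : ℝ) (hlam2' : 0 < lam2')
    (hlam2'spec : ∀ x : Fin N → ℝ, (∑ i, x i) = 0 →
      lam2' * (vnorm x) ^ 2 ≤ ∑ i, ∑ j, x i * ((w i * L i j + w j * L j i) / 2) * x j)
    -- (v) z* with F(z*) = 0
    (zstar : Fin N → ℝ) (hzstar : F zstar = 0)
    -- (vi) the gain condition α > (1/λ₂′)(l²/l̲ + l) with l = max(l̄, l_F)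
    (α : ℝ)
    (hα : α > (1 / lam2') * ((max lbar lF) ^ 2 / lunder + max lbar lF)) :
    -- conclusion: uniform exponential convergence of every trajectory to 1 (z*)ᵀ
    ∃ κ > (0:ℝ), ∃ ν > (0:ℝ), ∀ Z : ℝ → Matrix (Fin N) (Fin N) ℝ,
      (∀ t ≥ (0:ℝ), ∀ i j, HasDerivAt (fun s => Z s i j)
          (-α * (w i * ∑ k, L i k * Z t k j) - (if i = j then bF (Z t) i else 0)) t) →
      ∀ t ≥ (0:ℝ),
        mnorm (Z t - Matrix.of (fun _ j => zstar j)) ≤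
          κ * Real.exp (-ν * t) * mnorm (Z 0 - Matrix.of (fun _ j => zstar j)) := by
  have hN0 : (0:ℝ) < N := by exact_mod_cast Nat.lt_of_lt_of_le Nat.zero_lt_one hN
  have hN1 : (1:ℝ) ≤ N := by exact_mod_cast hN
  -- row sums of the Laplacian vanish
  have hLrow : ∀ i, ∑ k, L i k = 0 := by
    intro i
    have h1 : ∀ k, L i k = (if i = k then (∑ k', a i k') + a i k else 0) + (-(a i k)) := by
      intro k
      rw [hLdef]
      by_cases h : i = k
      · subst h; simp [ha_diag]
      · simp [h]
    rw [Finset.sum_congr rfl (fun k _ => h1 k), Finset.sum_add_distrib,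
      Finset.sum_ite_eq Finset.univ i (fun k => (∑ k', a i k') + a i k)]
    simp [ha_diag]
  -- constants
  set l := max lbar lF with hl
  have hl_pos : 0 < l := lt_of_lt_of_le hlbar (le_max_left _ _)
  have hα_pos : 0 < α := by
    have h0 : 0 < (1 / lam2') * (l ^ 2 / lunder + l) := by positivity
    linarith
  set β := α * lam2' - l with hβ
  have hβgt : l ^ 2 / lunder < β := by
    have h2 : (1 / lam2') * (l ^ 2 / lunder + l) * lam2' = l ^ 2 / lunder + l := by
      field_simp
    have h3 := mul_lt_mul_of_pos_right hα hlam2'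
    rw [h2] at h3
    simp only [hβ]
    linarith
  have hβ_pos : 0 < β := lt_trans (by positivity) hβgt
  have hsum_pos : 0 < lunder + β := by linarith
  have hnum_pos : 0 < lunder * β - l ^ 2 := by
    have := (div_lt_iff₀ hlunder).mp hβgt
    nlinarith
  set ε := (lunder * β - l ^ 2) / (lunder + β) with hε
  have hε_pos : 0 < ε := div_pos hnum_pos hsum_pos
  have hεs : ε * (lunder + β) = lunder * β - l ^ 2 :=
    div_mul_cancel₀ _ (ne_of_gt hsum_pos)
  have hε1 : ε ≤ lunder := by nlinarith [hεs, hsum_pos, sq_nonneg lunder, sq_nonneg l]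
  have hε2 : ε ≤ β := by nlinarith [hεs, hsum_pos, sq_nonneg β, sq_nonneg l]
  have hdet : l ^ 2 ≤ (lunder - ε) * (β - ε) := by nlinarith [hεs, sq_nonneg ε]
  set ν := ε / N with hν
  have hν_pos : 0 < ν := div_pos hε_pos hN0
  refine ⟨1, one_pos, ν, hν_pos, ?_⟩
  intro Z hZ t ht
  -- Lyapunov function
  set g : ℝ → ℝ := fun s => ∑ i, ∑ j, (Z s i j - zstar j) ^ 2 with hg
  set G : ℝ → ℝ := fun s => ∑ i, ∑ j, 2 * (Z s i j - zstar j) *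
      (-α * (w i * ∑ k, L i k * Z s k j) - (if i = j then bF (Z s) i else 0)) with hG
  have hg' : ∀ s ∈ Set.Ici (0:ℝ), HasDerivAt g (G s) s := by
    intro s hs
    have hsq : ∀ i j, HasDerivAt (fun u => (Z u i j - zstar j) ^ 2)
        (2 * (Z s i j - zstar j) *
          (-α * (w i * ∑ k, L i k * Z s k j) - (if i = j then bF (Z s) i else 0))) s := by
      intro i j
      have h := ((hZ s hs i j).sub_const (zstar j)).fun_pow 2
      refine h.congr_deriv ?_
      push_cast
      norm_num
    exact HasDerivAt.fun_sum (fun i _ => HasDerivAt.fun_sum (fun j _ => hsq i j))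
  -- derivative bound
  have hkey : ∀ s, G s ≤ -(2 * ν) * g s := by
    intro s
    have h := key_ineq N hN L hLrow w hbal F bF hbF lunder lbar lF hlunder hmono hFlip hbFlip
      lam2' hlam2'spec zstar hzstar α ε hα_pos hε_pos hε1 (by rw [← hβ]; exact hε2)
      (by rw [show α * lam2' - max lbar lF - ε = β - ε by rw [hβ]]; exact hdet)
      (le_of_lt hl_pos) (Z s)
    have h2 : -(2 * ε / (N:ℝ)) = -(2 * ν) := by rw [hν]; ring
    rw [h2] at h
    exact h
  -- Gronwall via monotonicity
  set c := 2 * ν with hc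
  set h : ℝ → ℝ := fun s => Real.exp (c * s) * g s with hh
  have hh' : ∀ s ∈ Set.Ici (0:ℝ),
      HasDerivAt h (Real.exp (c * s) * c * g s + Real.exp (c * s) * G s) s := by
    intro s hs
    have he : HasDerivAt (fun u => Real.exp (c * u)) (Real.exp (c * s) * c) s := by
      have h1 : HasDerivAt (fun u : ℝ => c * u) c s := by
        simpa using (hasDerivAt_id s).const_mul c
      exact h1.exp
    exact he.mul (hg' s hs)
  have hanti : AntitoneOn h (Set.Ici 0) := by
    apply antitoneOn_of_deriv_nonpos (convex_Ici 0)
    · exact fun s hs => (hh' s hs).continuousAt.continuousWithinAt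
    · intro s hs
      rw [interior_Ici] at hs
      exact (hh' s (Set.mem_Ici.mpr (le_of_lt hs))).differentiableAt.differentiableWithinAt
    · intro s hs
      rw [interior_Ici] at hs
      rw [(hh' s (Set.mem_Ici.mpr (le_of_lt hs))).deriv]
      have hk := hkey s
      calc Real.exp (c * s) * c * g s + Real.exp (c * s) * G s
          = Real.exp (c * s) * (c * g s + G s) := by ring
        _ ≤ 0 := mul_nonpos_of_nonneg_of_nonpos (Real.exp_nonneg _) (by linarith)
  have hbound : h t ≤ h 0 := hanti Set.self_mem_Ici (Set.mem_Ici.mpr ht) ht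
  have hh0 : h 0 = g 0 := by simp [hh]
  have hgt : g t ≤ Real.exp (-(c * t)) * g 0 := by
    have hp := Real.exp_pos (c * t)
    have hb : Real.exp (c * t) * g t ≤ g 0 := by rw [← hh0]; exact hbound
    have h1 : g t ≤ g 0 / Real.exp (c * t) := (le_div_iff₀ hp).mpr (by linarith)
    rwa [div_eq_mul_inv, ← Real.exp_neg, mul_comm] at h1
  -- conclude
  have hmn : ∀ s, mnorm (Z s - Matrix.of (fun _ j => zstar j)) = Real.sqrt (g s) := by
    intro s
    unfold mnorm
    congr 1
  have hexp2 : Real.exp (-(c * t)) = (Real.exp (-ν * t)) ^ 2 := by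
    rw [sq, ← Real.exp_add, hc]
    congr 1
    ring
  rw [hmn, hmn, one_mul]
  calc Real.sqrt (g t) ≤ Real.sqrt (Real.exp (-(c * t)) * g 0) := Real.sqrt_le_sqrt hgt
    _ = Real.exp (-ν * t) * Real.sqrt (g 0) := by
        rw [hexp2, Real.sqrt_mul (sq_nonneg _), Real.sqrt_sq (Real.exp_nonneg _)]
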